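/- Let m be a positive integer, F = GF(2^m), r ≥ 1, and for a = (a₀,...,a_r) ∈ F^{r+1} let P_a = Σ_{t=0}^r P^t(a_t). Let x and e be binary m-tuples with e ≠ 0, and set y = x⊕e (bitwise XOR). Then Σ_{a ∈ F^{r+1}} i^{y P_a yᵀ − x P_a xᵀ} ≠ 0 (i.e. the rows of the Delsarte–Goethals sieve indexed by x and y are not orthogonal) if and only if both of the following hold: (C1) for every t with 1 ≤ t ≤ r, (x/e) + (x/e)^{2^t} = 1 + Σ_{j=0}^{m-1} e_j·(ξ^j/e)^{2^t+1} in F, where x, e are identified with field elements and e_j are the binary coordinates of e; and (C2) Σ_{a ∈ F} i^{e P⁰(a) (2x+e)ᵀ} ≠ 0, where the exponent is evaluated in ℤ₄ (the vector 2x+e has entries 2x_j + e_j in ℤ₄). -/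

import Mathlib

noncomputable section

namespace DGPaper

/-- The absolute trace `GF(2^m) → 𝔽₂`. -/
def tr {m : ℕ} (x : GaloisField 2 m) : ZMod 2 :=
  Algebra.trace (ZMod 2) (GaloisField 2 m) x

/-- Lift a bit to `ℤ₄`. -/
def lift2 (v : ZMod 2) : ZMod 4 := (v.val : ZMod 4)

/-- `i^v` for `v ∈ ℤ₄`. -/
def zeta (v : ZMod 4) : ℂ := Complex.I ^ v.val

/-- The field element of `GF(2^m)` associated to a binary `m`-tuple via the basis
`1, ξ, …, ξ^{m-1}`. -/
def fld {m : ℕ} (ξ : GaloisField 2 m) (x : Fin m → ZMod 2) : GaloisField 2 m :=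
  ∑ j : Fin m, x j • ξ ^ (j : ℕ)

/-- The binary symmetric matrix `P^t(a)`: for `t = 0` it represents the bilinear form
`(x,y) ↦ Tr(x y a)`, and for `t ≥ 1` the (zero-diagonal) form
`(x,y) ↦ Tr((x y^{2^t} + x^{2^t} y) a)`, in the basis `1, ξ, …, ξ^{m-1}` of `GF(2^m)`
over `𝔽₂`. -/
def Pmat {m : ℕ} (ξ : GaloisField 2 m) (t : ℕ) (a : GaloisField 2 m) :
    Matrix (Fin m) (Fin m) (ZMod 2) :=
  Matrix.of fun i j =>
    if t = 0 then tr (ξ ^ (i : ℕ) * ξ ^ (j : ℕ) * a)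
    else tr ((ξ ^ (i : ℕ) * (ξ ^ (j : ℕ)) ^ (2 ^ t) + (ξ ^ (i : ℕ)) ^ (2 ^ t) * ξ ^ (j : ℕ)) * a)

/-- The quadratic form `x P xᵀ` evaluated in `ℤ₄` (the `0/1` entries of `P` and `x`
being lifted to `ℤ₄`). -/
def qform {m : ℕ} (P : Matrix (Fin m) (Fin m) (ZMod 2)) (x : Fin m → ZMod 2) : ZMod 4 :=
  ∑ i : Fin m, ∑ j : Fin m, lift2 (x i) * lift2 (P i j) * lift2 (x j)

instance {m : ℕ} : Fintype (GaloisField 2 m) := Fintype.ofFinite _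


lemma lift2_mul (u v : ZMod 2) : lift2 (u*v) = lift2 u * lift2 v := by revert u v; decide

/-- `z ↦ 2 * lift2 z` as an additive hom. -/
def L2 : ZMod 2 →+ ZMod 4 where
  toFun z := 2 * lift2 z
  map_zero' := by decide
  map_add' := by decide

lemma L2_apply (z : ZMod 2) : L2 z = 2 * lift2 z := rfl

lemma zeta_add (u v : ZMod 4) : zeta (u + v) = zeta u * zeta v := by
  unfold zeta
  rw [← pow_add]
  rw [ZMod.val_add]
  conv_rhs => rw [← Nat.div_add_mod (u.val + v.val) 4]
  rw [pow_add, pow_mul, Complex.I_pow_four, one_pow, one_mul]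

lemma zeta_sum {ι : Type*} (s : Finset ι) (f : ι → ZMod 4) :
    zeta (∑ i ∈ s, f i) = ∏ i ∈ s, zeta (f i) := by
  induction s using Finset.cons_induction with
  | empty => simp [zeta]
  | cons a s ha ih => rw [Finset.sum_cons, Finset.prod_cons, zeta_add, ih]

lemma zeta_L2 (b : ZMod 2) : zeta (L2 b) = (-1 : ℂ) ^ b.val := by
  have h2 : ∀ c : ZMod 2, c = 0 ∨ c = 1 := by decide
  rcases h2 b with h | h <;> subst h
  · simp [zeta, L2, lift2]
  · have : (L2 1).val = 2 := by decide
    rw [zeta, this]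
    simp [Complex.I_sq, ZMod.val_one]

lemma tri_split {n : ℕ} {M : Type*} [AddCommMonoid M] (f : Fin n → Fin n → M) :
    ∑ i, ∑ j, f i j = (∑ i, f i i) + ((∑ i, ∑ j, if i < j then f i j else 0)
      + (∑ i, ∑ j, if j < i then f i j else 0)) := by
  rw [← Finset.sum_add_distrib, ← Finset.sum_add_distrib]
  have : ∀ i : Fin n, f i i = ∑ j, if i = j then f i j else 0 := by
    intro i
    rw [Finset.sum_ite_eq Finset.univ i (fun j => f i j)]
    simp
  apply Finset.sum_congr rfl; intro i _
  rw [this i]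
  rw [← Finset.sum_add_distrib, ← Finset.sum_add_distrib]
  apply Finset.sum_congr rfl; intro j _
  rcases lt_trichotomy i j with h | h | h
  · simp [h, ne_of_lt h, lt_asymm h, (ne_of_lt h)]
  · simp [h, lt_irrefl]
  · simp [h, ne_of_gt h, lt_asymm h]

lemma swap_lt {n : ℕ} {M : Type*} [AddCommMonoid M] (f : Fin n → Fin n → M) :
    ∑ i, ∑ j, (if j < i then f i j else 0) = ∑ i, ∑ j, if i < j then f j i else 0 :=
  Finset.sum_comm

variable {m : ℕ}

def bilin (P : Matrix (Fin m) (Fin m) (ZMod 2)) (x e : Fin m → ZMod 2) : ZMod 2 :=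
  ∑ i, ∑ j, x i * P i j * e j

def uptri (P : Matrix (Fin m) (Fin m) (ZMod 2)) (e : Fin m → ZMod 2) : ZMod 2 :=
  ∑ i, ∑ j, if i < j then e i * P i j * e j else 0

lemma lift2_zero : lift2 0 = 0 := by decide

lemma lift2_mul3 (a b c : ZMod 2) : lift2 a * lift2 b * lift2 c = lift2 (a*b*c) := by
  rw [← lift2_mul, ← lift2_mul]

lemma two_lift2_two_lift2 (z : ZMod 2) : 2 * lift2 z + 2 * lift2 z = 0 := by revert z; decide

lemma expand_pt (p xi ei xj ej : ZMod 2) :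
    lift2 ((xi+ei)*p*(xj+ej)) =
      lift2 (xi*p*xj) + lift2 (ei*p*ej) + (lift2 (xi*p*ej) + lift2 (ei*p*xj))
      + ((2*lift2 (xi*ei*p*xj) + 2*lift2 (xi*p*(xj*ej)))
        + (2*lift2 (xi*ei*p*ej) + 2*lift2 (ei*p*(xj*ej)))) := by
  revert p xi ei xj ej; decide

lemma two_mul_dsum_lift2 (f : Fin m → Fin m → ZMod 2) :
    2 * lift2 (∑ i, ∑ j, f i j) = ∑ i, ∑ j, 2 * lift2 (f i j) := by
  have h : (2 : ZMod 4) * lift2 (∑ i, ∑ j, f i j) = L2 (∑ i, ∑ j, f i j) := rfl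
  rw [h, map_sum]
  apply Finset.sum_congr rfl; intro i _
  rw [map_sum]; rfl

lemma dsum2_zero (f : Fin m → Fin m → ZMod 2) :
    (∑ i, ∑ j, 2 * lift2 (f i j)) + (∑ i, ∑ j, 2 * lift2 (f i j)) = 0 := by
  rw [← Finset.sum_add_distrib, Finset.sum_eq_zero]
  intro i _
  rw [← Finset.sum_add_distrib, Finset.sum_eq_zero]
  intro j _
  exact two_lift2_two_lift2 _

lemma sum_swap_eq {M : Type*} [AddCommMonoid M] (f g : Fin m → Fin m → M)
    (h : ∀ i j, g i j = f j i) : ∑ i, ∑ j, g i j = ∑ i, ∑ j, f i j := by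
  rw [Finset.sum_comm]
  apply Finset.sum_congr rfl; intro i _
  apply Finset.sum_congr rfl; intro j _
  exact h j i

lemma dsum3_swap {ι M : Type*} [AddCommMonoid M] (s : Finset ι) (f : ι → Fin m → Fin m → M) :
    ∑ i, ∑ j, ∑ t ∈ s, f t i j = ∑ t ∈ s, ∑ i, ∑ j, f t i j := by
  have h1 : ∑ i : Fin m, ∑ j : Fin m, ∑ t ∈ s, f t i j
      = ∑ i : Fin m, ∑ t ∈ s, ∑ j : Fin m, f t i j :=
    Finset.sum_congr rfl (fun i _ => Finset.sum_comm)
  rw [h1, Finset.sum_comm]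

lemma qform_add_decomp (P : Matrix (Fin m) (Fin m) (ZMod 2)) (hsym : ∀ i j, P j i = P i j)
    (x e : Fin m → ZMod 2) :
    qform P (x + e) = qform P x + qform P e + 2 * lift2 (bilin P x e) := by
  unfold qform
  have step1 : ∀ i j : Fin m, lift2 ((x+e) i) * lift2 (P i j) * lift2 ((x+e) j)
      = lift2 (x i*P i j*x j) + lift2 (e i*P i j*e j)
        + (lift2 (x i*P i j*e j) + lift2 (e i*P i j*x j))
        + ((2*lift2 (x i*e i*P i j*x j) + 2*lift2 (x i*P i j*(x j*e j)))
          + (2*lift2 (x i*e i*P i j*e j) + 2*lift2 (e i*P i j*(x j*e j)))) := by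
    intro i j
    rw [lift2_mul3]
    exact expand_pt (P i j) (x i) (e i) (x j) (e j)
  have hxe : (∑ i, ∑ j, lift2 (e i*P i j*x j)) = ∑ i, ∑ j, lift2 (x i*P i j*e j) := by
    apply sum_swap_eq; intro i j; rw [hsym i j]; ring_nf
  have h56 : (∑ i, ∑ j, 2*lift2 (x i*P i j*(x j*e j)))
      = ∑ i, ∑ j, 2*lift2 (x i*e i*P i j*x j) := by
    apply sum_swap_eq; intro i j; congr 1; congr 1; rw [hsym i j]; ring
  have h78 : (∑ i, ∑ j, 2*lift2 (e i*P i j*(x j*e j)))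
      = ∑ i, ∑ j, 2*lift2 (x i*e i*P i j*e j) := by
    apply sum_swap_eq; intro i j; congr 1; congr 1; rw [hsym i j]; ring
  have hb : (∑ i, ∑ j, lift2 (x i*P i j*e j)) + (∑ i, ∑ j, lift2 (x i*P i j*e j))
      = 2 * lift2 (bilin P x e) := by
    rw [← two_mul, bilin, two_mul_dsum_lift2, Finset.mul_sum]
    apply Finset.sum_congr rfl; intro i _
    rw [Finset.mul_sum]
  calc ∑ i, ∑ j, lift2 ((x+e) i) * lift2 (P i j) * lift2 ((x+e) j)
      = (∑ i, ∑ j, lift2 (x i*P i j*x j)) + (∑ i, ∑ j, lift2 (e i*P i j*e j))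
        + ((∑ i, ∑ j, lift2 (x i*P i j*e j)) + (∑ i, ∑ j, lift2 (e i*P i j*x j)))
        + (((∑ i, ∑ j, 2*lift2 (x i*e i*P i j*x j)) + (∑ i, ∑ j, 2*lift2 (x i*P i j*(x j*e j))))
          + ((∑ i, ∑ j, 2*lift2 (x i*e i*P i j*e j)) + (∑ i, ∑ j, 2*lift2 (e i*P i j*(x j*e j))))) := by
        simp only [step1, Finset.sum_add_distrib]
    _ = (∑ i, ∑ j, lift2 (x i*P i j*x j)) + (∑ i, ∑ j, lift2 (e i*P i j*e j))
        + 2 * lift2 (bilin P x e) := by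
        rw [hxe, h56, h78, hb]
        rw [add_comm (∑ i, ∑ j, 2*lift2 (x i*e i*P i j*x j)) (∑ i, ∑ j, 2*lift2 (x i*e i*P i j*x j))]
        rw [dsum2_zero, dsum2_zero, add_zero, add_zero]
    _ = _ := by simp only [lift2_mul3]

lemma qform_diag_decomp (P : Matrix (Fin m) (Fin m) (ZMod 2)) (hsym : ∀ i j, P j i = P i j)
    (e : Fin m → ZMod 2) :
    qform P e = (∑ i, lift2 (e i * P i i * e i)) + 2 * lift2 (uptri P e) := by
  unfold qform
  simp only [lift2_mul3]
  rw [tri_split (fun i j => lift2 (e i * P i j * e j))]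
  congr 1
  have hlow : (∑ i, ∑ j, if j < i then lift2 (e i * P i j * e j) else 0)
      = ∑ i, ∑ j, if i < j then lift2 (e i * P i j * e j) else 0 := by
    rw [swap_lt (fun i j => lift2 (e i * P i j * e j))]
    apply Finset.sum_congr rfl; intro i _
    apply Finset.sum_congr rfl; intro j _
    by_cases h : i < j
    · simp only [h, if_true]; congr 1; rw [hsym i j]; ring
    · simp [h]
  rw [hlow, ← two_mul, uptri, two_mul_dsum_lift2, Finset.mul_sum]
  apply Finset.sum_congr rfl; intro i _
  rw [Finset.mul_sum]
  apply Finset.sum_congr rfl; intro j _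
  by_cases h : i < j <;> simp [h, lift2_zero]

lemma bilin_sum {ι : Type*} (s : Finset ι) (P : ι → Matrix (Fin m) (Fin m) (ZMod 2))
    (x e : Fin m → ZMod 2) :
    bilin (∑ t ∈ s, P t) x e = ∑ t ∈ s, bilin (P t) x e := by
  unfold bilin
  rw [← dsum3_swap s (fun t i j => x i * P t i j * e j)]
  apply Finset.sum_congr rfl; intro i _
  apply Finset.sum_congr rfl; intro j _
  rw [Matrix.sum_apply, Finset.mul_sum, Finset.sum_mul]

lemma uptri_sum {ι : Type*} (s : Finset ι) (P : ι → Matrix (Fin m) (Fin m) (ZMod 2))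
    (e : Fin m → ZMod 2) :
    uptri (∑ t ∈ s, P t) e = ∑ t ∈ s, uptri (P t) e := by
  unfold uptri
  rw [← dsum3_swap s (fun t i j => if i < j then e i * P t i j * e j else 0)]
  apply Finset.sum_congr rfl; intro i _
  apply Finset.sum_congr rfl; intro j _
  by_cases h : i < j
  · simp only [h, if_true, Matrix.sum_apply, Finset.mul_sum, Finset.sum_mul]
  · simp [h]

variable {m : ℕ}

abbrev F (m : ℕ) := GaloisField 2 m

lemma tr_add (u v : F m) : tr (u + v) = tr u + tr v :=
  map_add (Algebra.trace (ZMod 2) (F m)) u v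

lemma tr_sum {ι : Type*} (s : Finset ι) (f : ι → F m) : tr (∑ i ∈ s, f i) = ∑ i ∈ s, tr (f i) :=
  map_sum (Algebra.trace (ZMod 2) (F m)) f s

lemma tr_smul (c : ZMod 2) (u : F m) : tr (c • u) = c * tr u := by
  rw [show tr (c • u) = Algebra.trace (ZMod 2) (F m) (c • u) from rfl, map_smul, smul_eq_mul]; rfl

lemma tr_zero : tr (0 : F m) = 0 := map_zero (Algebra.trace (ZMod 2) (F m))

lemma Pmat_symm (ξ : F m) (t : ℕ) (a : F m) (i j : Fin m) :
    Pmat ξ t a j i = Pmat ξ t a i j := by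
  unfold Pmat
  by_cases h : t = 0 <;> simp only [h, Matrix.of_apply, if_true, if_false, reduceIte]
  · congr 1; ring
  · congr 1; ring

lemma Pmat_diag_zero (ξ : F m) (t : ℕ) (ht : t ≠ 0) (a : F m) (i : Fin m) :
    Pmat ξ t a i i = 0 := by
  unfold Pmat
  simp only [Matrix.of_apply, ht, if_false, reduceIte]
  rw [show (ξ ^ (i:ℕ) * (ξ ^ (i:ℕ)) ^ 2 ^ t + (ξ ^ (i:ℕ)) ^ 2 ^ t * ξ ^ (i:ℕ)) = 
    ξ ^ (i:ℕ) * (ξ ^ (i:ℕ)) ^ 2 ^ t + ξ ^ (i:ℕ) * (ξ ^ (i:ℕ)) ^ 2 ^ t by ring]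
  rw [CharTwo.add_self_eq_zero, zero_mul, tr_zero]

/-- the trace character sum. -/
lemma charSum_ne_zero_iff (c : F m) :
    (∑ b : F m, zeta (2 * lift2 (tr (c * b)))) ≠ 0 ↔ c = 0 := by
  constructor
  · intro hS
    by_contra hc
    apply hS
    obtain ⟨b₀, hb₀⟩ : ∃ b₀, tr (c * b₀) = 1 := by
      have hnd := traceForm_nondegenerate (ZMod 2) (F m)
      by_contra hb
      push_neg at hb
      apply hc
      apply hnd.1
      intro b
      have h2 := hb b
      rw [Algebra.traceForm_apply]
      have : ∀ z : ZMod 2, z ≠ 1 → z = 0 := by decide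
      exact this _ h2
    have hshift : (∑ b : F m, zeta (2 * lift2 (tr (c * b))))
        = ∑ b : F m, zeta (2 * lift2 (tr (c * (b + b₀)))) := by
      apply Fintype.sum_equiv (Equiv.subRight b₀)
      intro b
      simp [Equiv.subRight_apply, sub_add_cancel]
    have hneg : ∀ b : F m, zeta (2 * lift2 (tr (c * (b + b₀)))) = - zeta (2 * lift2 (tr (c * b))) := by
      intro b
      rw [mul_add, tr_add, hb₀]
      have : (2 : ZMod 4) * lift2 (tr (c*b) + 1) = 2 * lift2 (tr (c*b)) + 2 * lift2 1 := by
        rw [show ∀ u v : ZMod 2, (2:ZMod 4) * lift2 (u + v) = 2*lift2 u + 2*lift2 v from by decide]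
      rw [this, zeta_add]
      rw [show zeta (2 * lift2 1) = -1 from by
        rw [show (2 : ZMod 4) * lift2 1 = 2 from by decide]
        show Complex.I ^ (2 : ZMod 4).val = -1
        rw [show ((2 : ZMod 4)).val = 2 from rfl, Complex.I_sq]]
      ring
    have key : (∑ b : F m, zeta (2 * lift2 (tr (c * b))))
        = - ∑ b : F m, zeta (2 * lift2 (tr (c * b))) := by
      conv_lhs => rw [hshift]
      rw [Finset.sum_congr rfl (fun b _ => hneg b)]
      rw [← Finset.sum_neg_distrib]
    have h2 : (2:ℂ) * (∑ b : F m, zeta (2 * lift2 (tr (c * b)))) = 0 := by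
      rw [two_mul]
      nth_rewrite 1 [key]
      ring
    exact (mul_eq_zero.mp h2).resolve_left two_ne_zero
  · intro hc
    subst hc
    simp only [zero_mul, tr_zero, lift2_zero, mul_zero]
    rw [show zeta 0 = 1 from by rw [zeta]; norm_num [ZMod.val_zero]]
    rw [Finset.sum_const]
    simp only [nsmul_eq_mul, mul_one]
    have : (0 : ℕ) < Fintype.card (F m) := Fintype.card_pos
    exact Nat.cast_ne_zero.mpr (Nat.pos_iff_ne_zero.mp this)


variable {m : ℕ}

lemma mul_self_z2 (c : ZMod 2) : c * c = c := by revert c; decide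

lemma smul_pow2 (c : ZMod 2) (z : F m) (n : ℕ) (hn : n ≠ 0) : (c • z) ^ n = c • z ^ n := by
  have h2 : ∀ d : ZMod 2, d = 0 ∨ d = 1 := by decide
  rcases h2 c with h | h <;> subst h
  · rw [zero_smul, zero_smul, zero_pow hn]
  · rw [one_smul, one_smul]

lemma frob (ξ : F m) (e : Fin m → ZMod 2) (t : ℕ) :
    (fld ξ e) ^ (2 ^ t) = ∑ j : Fin m, e j • (ξ ^ (j : ℕ)) ^ (2 ^ t) := by
  rw [fld, sum_pow_char_pow]
  exact Finset.sum_congr rfl fun j _ => smul_pow2 _ _ _ (by positivity)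

/-- the field element governing the `t ≥ 1` factor. -/
def Cfe (ξ : F m) (x e : Fin m → ZMod 2) (t : ℕ) : F m :=
  (fld ξ x * (fld ξ e) ^ (2^t) + (fld ξ x) ^ (2^t) * fld ξ e)
  + ((fld ξ e) ^ (2^t + 1) + ∑ j : Fin m, e j • (ξ ^ (j : ℕ)) ^ (2^t + 1))

lemma bilin_tr (ξ : F m) (x e : Fin m → ZMod 2) (t : ℕ) (ht : t ≠ 0) (a : F m) :
    bilin (Pmat ξ t a) x e
      = tr ((fld ξ x * (fld ξ e) ^ (2^t) + (fld ξ x) ^ (2^t) * fld ξ e) * a) := by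
  have hentry : ∀ i j : Fin m, Pmat ξ t a i j
      = tr ((ξ ^ (i:ℕ) * (ξ ^ (j:ℕ)) ^ (2^t) + (ξ ^ (i:ℕ)) ^ (2^t) * ξ ^ (j:ℕ)) * a) := by
    intro i j; unfold Pmat; simp [ht]
  have step : bilin (Pmat ξ t a) x e
      = tr ((∑ i : Fin m, ∑ j : Fin m,
          (x i * e j) • (ξ ^ (i:ℕ) * (ξ ^ (j:ℕ)) ^ (2^t) + (ξ ^ (i:ℕ)) ^ (2^t) * ξ ^ (j:ℕ))) * a) := by
    rw [Finset.sum_mul, tr_sum]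
    unfold bilin
    apply Finset.sum_congr rfl; intro i _
    rw [Finset.sum_mul, tr_sum]
    apply Finset.sum_congr rfl; intro j _
    rw [hentry i j, smul_mul_assoc, tr_smul]
    ring
  rw [step]
  congr 2
  have hX : fld ξ x * (fld ξ e) ^ (2^t) = ∑ i : Fin m, ∑ j : Fin m,
      (x i * e j) • (ξ ^ (i:ℕ) * (ξ ^ (j:ℕ)) ^ (2^t)) := by
    rw [frob, fld, Finset.sum_mul_sum]
    exact Finset.sum_congr rfl fun i _ => Finset.sum_congr rfl fun j _ =>
      smul_mul_smul_comm (x i) (ξ ^ (i:ℕ)) (e j) ((ξ ^ (j:ℕ)) ^ (2^t))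
  have hXq : (fld ξ x) ^ (2^t) * fld ξ e = ∑ i : Fin m, ∑ j : Fin m,
      (x i * e j) • ((ξ ^ (i:ℕ)) ^ (2^t) * ξ ^ (j:ℕ)) := by
    rw [frob, fld, Finset.sum_mul_sum]
    exact Finset.sum_congr rfl fun i _ => Finset.sum_congr rfl fun j _ =>
      smul_mul_smul_comm (x i) ((ξ ^ (i:ℕ)) ^ (2^t)) (e j) (ξ ^ (j:ℕ))
  rw [hX, hXq, ← Finset.sum_add_distrib]
  apply Finset.sum_congr rfl; intro i _
  rw [← Finset.sum_add_distrib]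
  apply Finset.sum_congr rfl; intro j _
  rw [smul_add]

lemma uptri_tr (ξ : F m) (e : Fin m → ZMod 2) (t : ℕ) (ht : t ≠ 0) (a : F m) :
    uptri (Pmat ξ t a) e
      = tr (((fld ξ e) ^ (2^t + 1) + ∑ j : Fin m, e j • (ξ ^ (j : ℕ)) ^ (2^t + 1)) * a) := by
  have hentry : ∀ i j : Fin m, Pmat ξ t a i j
      = tr ((ξ ^ (i:ℕ) * (ξ ^ (j:ℕ)) ^ (2^t) + (ξ ^ (i:ℕ)) ^ (2^t) * ξ ^ (j:ℕ)) * a) := by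
    intro i j; unfold Pmat; simp [ht]
  set h : Fin m → Fin m → F m := fun i j => (e i * e j) • (ξ ^ (i:ℕ) * (ξ ^ (j:ℕ)) ^ (2^t)) with hh
  have hpt : ∀ i j : Fin m, h i j = (e i * e j) • (ξ ^ (i:ℕ) * (ξ ^ (j:ℕ)) ^ (2^t)) := fun _ _ => rfl
  have step : uptri (Pmat ξ t a) e
      = tr ((∑ i : Fin m, ∑ j : Fin m, if i < j then h i j + h j i else 0) * a) := by
    rw [Finset.sum_mul, tr_sum]
    unfold uptri
    apply Finset.sum_congr rfl; intro i _
    rw [Finset.sum_mul, tr_sum]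
    apply Finset.sum_congr rfl; intro j _
    by_cases hij : i < j
    · simp only [hij, if_true]
      rw [hentry i j, hpt i j, hpt j i, add_mul, tr_add, add_mul, tr_add,
        smul_mul_assoc, smul_mul_assoc, tr_smul, tr_smul,
        show ξ ^ (j:ℕ) * (ξ ^ (i:ℕ)) ^ (2^t) * a = (ξ ^ (i:ℕ)) ^ (2^t) * ξ ^ (j:ℕ) * a from by ring]
      ring
    · simp [hij, tr_zero]
  rw [step]
  congr 2
  set U := (∑ i : Fin m, ∑ j : Fin m, if i < j then h i j else 0) with hU
  set L := (∑ i : Fin m, ∑ j : Fin m, if j < i then h i j else 0) with hL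
  set D := (∑ i : Fin m, h i i) with hD
  set Full := (∑ i : Fin m, ∑ j : Fin m, h i j) with hFull
  have hsplit : (∑ i : Fin m, ∑ j : Fin m, if i < j then h i j + h j i else 0) = U + L := by
    rw [hU, hL, swap_lt h, ← Finset.sum_add_distrib]
    apply Finset.sum_congr rfl; intro i _
    rw [← Finset.sum_add_distrib]
    apply Finset.sum_congr rfl; intro j _
    by_cases hij : i < j <;> simp [hij]
  have htri : Full = D + (U + L) := tri_split h
  have hupplow : U + L = Full + D := by
    calc U + L = (U + L) + (D + D) := by rw [CharTwo.add_self_eq_zero, add_zero]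
    _ = (D + (U + L)) + D := by ring
    _ = Full + D := by rw [← htri]
  have hfull : Full = (fld ξ e) ^ (2^t + 1) := by
    rw [hFull, pow_succ, mul_comm ((fld ξ e) ^ (2^t)) (fld ξ e), frob, fld, Finset.sum_mul_sum]
    exact Finset.sum_congr rfl fun i _ => Finset.sum_congr rfl fun j _ =>
      (smul_mul_smul_comm (e i) (ξ ^ (i:ℕ)) (e j) ((ξ ^ (j:ℕ)) ^ (2^t))).symm
  have hdiag : D = ∑ j : Fin m, e j • (ξ ^ (j : ℕ)) ^ (2^t + 1) := by
    rw [hD]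
    apply Finset.sum_congr rfl; intro i _
    rw [hpt i i, mul_self_z2, pow_succ, mul_comm ((ξ ^ (i:ℕ)) ^ (2^t)) (ξ ^ (i:ℕ))]
  rw [hsplit, hupplow, hfull, hdiag]

lemma beta_tr (ξ : F m) (x e : Fin m → ZMod 2) (t : ℕ) (ht : t ≠ 0) (a : F m) :
    uptri (Pmat ξ t a) e + bilin (Pmat ξ t a) x e = tr (Cfe ξ x e t * a) := by
  rw [uptri_tr ξ e t ht a, bilin_tr ξ x e t ht a, Cfe, add_comm]
  simp only [add_mul, tr_add]

lemma fld_ne_zero (ξ : F m) (hξ : LinearIndependent (ZMod 2) fun j : Fin m => ξ ^ (j : ℕ))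
    (e : Fin m → ZMod 2) (he : e ≠ 0) : fld ξ e ≠ 0 := by
  intro h
  apply he
  funext j
  exact Fintype.linearIndependent_iff.mp hξ e h j

lemma Cfe_zero_iff (ξ : F m) (x e : Fin m → ZMod 2) (t : ℕ) (hE : fld ξ e ≠ 0) :
    Cfe ξ x e t = 0 ↔
      fld ξ x / fld ξ e + (fld ξ x / fld ξ e) ^ 2 ^ t =
        1 + ∑ j : Fin m, e j • (ξ ^ (j : ℕ) / fld ξ e) ^ (2 ^ t + 1) := by
  set q := 2^t with hq
  set E := fld ξ e with hEdef
  set X := fld ξ x with hXdef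
  have hEq1 : E ^ (q+1) ≠ 0 := pow_ne_zero _ hE
  have hfac : Cfe ξ x e t
      = E ^ (q+1) * ((X / E + (X / E) ^ q) + (1 + ∑ j : Fin m, e j • (ξ ^ (j:ℕ) / E) ^ (q + 1))) := by
    rw [Cfe]
    have h1 : E ^ (q+1) * (X / E) = X * E ^ q := by
      rw [pow_succ]
      field_simp
    have h2 : E ^ (q+1) * (X / E) ^ q = X ^ q * E := by
      rw [div_pow, pow_succ]
      field_simp
    have h3 : E ^ (q+1) * (1:F m) = E ^ (q+1) := mul_one _
    have h4 : E ^ (q+1) * (∑ j : Fin m, e j • (ξ ^ (j:ℕ) / E) ^ (q + 1))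
        = ∑ j : Fin m, e j • (ξ ^ (j:ℕ)) ^ (q+1) := by
      rw [Finset.mul_sum]
      apply Finset.sum_congr rfl; intro j _
      rw [mul_smul_comm, div_pow, mul_div_cancel₀ _ hEq1]
    rw [mul_add, mul_add, mul_add, h1, h2, h3, h4]
  rw [hfac, mul_eq_zero, or_iff_right hEq1]
  rw [← CharTwo.sub_eq_add, sub_eq_zero]
variable {m : ℕ}

lemma L2_sum {ι : Type*} (s : Finset ι) (f : ι → ZMod 2) :
    2 * lift2 (∑ i ∈ s, f i) = ∑ i ∈ s, 2 * lift2 (f i) := by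
  have h : (2:ZMod 4) * lift2 (∑ i ∈ s, f i) = L2 (∑ i ∈ s, f i) := rfl
  rw [h, map_sum]; rfl

lemma two_lift2_add (u v : ZMod 2) : 2 * lift2 (u + v) = 2 * lift2 u + 2 * lift2 v := by
  revert u v; decide

lemma pt0 (p ei xj ej : ZMod 2) :
    lift2 ei * lift2 p * (2 * lift2 xj + lift2 ej)
      = 2 * lift2 (ei * p * xj) + lift2 (ei * p * ej) := by
  revert p ei xj ej; decide

lemma bilin_symm (P : Matrix (Fin m) (Fin m) (ZMod 2)) (hsym : ∀ i j, P j i = P i j)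
    (x e : Fin m → ZMod 2) : bilin P e x = bilin P x e := by
  unfold bilin
  apply sum_swap_eq
  intro i j
  rw [hsym i j]; ring

lemma delta0_eq (x e : Fin m → ZMod 2) (P : Matrix (Fin m) (Fin m) (ZMod 2))
    (hsym : ∀ i j, P j i = P i j) :
    qform P e + 2 * lift2 (bilin P x e)
      = ∑ i : Fin m, ∑ j : Fin m,
          lift2 (e i) * lift2 (P i j) * (2 * lift2 (x j) + lift2 (e j)) := by
  have hr : ∀ i j : Fin m, lift2 (e i) * lift2 (P i j) * (2 * lift2 (x j) + lift2 (e j))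
      = 2 * lift2 (e i * P i j * x j) + lift2 (e i * P i j * e j) :=
    fun i j => pt0 (P i j) (e i) (x j) (e j)
  have hb : (2:ZMod 4) * lift2 (bilin P e x)
      = ∑ i : Fin m, ∑ j : Fin m, 2 * lift2 (e i * P i j * x j) := two_mul_dsum_lift2 _
  have hq : qform P e = ∑ i : Fin m, ∑ j : Fin m, lift2 (e i * P i j * e j) := by
    unfold qform; simp only [lift2_mul3]
  simp only [hr, Finset.sum_add_distrib]
  rw [← hb, bilin_symm P hsym x e, hq, add_comm]

/-- Non-orthogonality criterion for rows of the Delsarte–Goethals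
sieve.  For `r ≥ 1` and binary `m`-tuples `x` and `y = x ⊕ e` with `e ≠ 0`, the rows of
the `DG(m,r)` sieve indexed by `x` and `y` are non-orthogonal, i.e.
`∑_{a ∈ F^{r+1}} i^{y P_a yᵀ − x P_a xᵀ} ≠ 0` where `P_a = ∑_{t=0}^r P^t(a_t)`, if and
only if both:
(C1) for every `1 ≤ t ≤ r`, `(x/e) + (x/e)^{2^t} = 1 + ∑_j e_j (ξ^j/e)^{2^t+1}` in
`GF(2^m)`; and
(C2) `∑_{a ∈ GF(2^m)} i^{e P⁰(a) (2x + e)ᵀ} ≠ 0`. -/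
theorem dg_sieve_rows_nonorthogonal_iff
    (m r : ℕ) (hm : 0 < m) (hr : 1 ≤ r)
    (ξ : GaloisField 2 m)
    (hξ : LinearIndependent (ZMod 2) fun j : Fin m => ξ ^ (j : ℕ))
    (x e : Fin m → ZMod 2) (he : e ≠ 0) :
    (∑ a : Fin (r + 1) → GaloisField 2 m,
        zeta (qform (∑ t : Fin (r + 1), Pmat ξ (t : ℕ) (a t)) (x + e) -
          qform (∑ t : Fin (r + 1), Pmat ξ (t : ℕ) (a t)) x)) ≠ 0 ↔
      ((∀ t : ℕ, 1 ≤ t → t ≤ r →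
          fld ξ x / fld ξ e + (fld ξ x / fld ξ e) ^ 2 ^ t =
            1 + ∑ j : Fin m, e j • (ξ ^ (j : ℕ) / fld ξ e) ^ (2 ^ t + 1)) ∧
        (∑ a : GaloisField 2 m,
            zeta (∑ i : Fin m, ∑ j : Fin m,
              lift2 (e i) * lift2 (Pmat ξ 0 a i j) *
                (2 * lift2 (x j) + lift2 (e j)))) ≠ 0) := by
  classical
  set δ : Fin (r+1) → F m → ZMod 4 := fun t b =>
    if t = 0 then qform (Pmat ξ 0 b) e + 2 * lift2 (bilin (Pmat ξ 0 b) x e)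
    else 2 * lift2 (uptri (Pmat ξ (t:ℕ) b) e + bilin (Pmat ξ (t:ℕ) b) x e) with hδ
  have hE : fld ξ e ≠ 0 := fld_ne_zero ξ hξ e he
  have hvne : ∀ t : Fin (r+1), t ≠ 0 → (t:ℕ) ≠ 0 := by
    intro t ht hv
    exact ht (Fin.ext (by simp [hv]))
  have hPasymm : ∀ (a : Fin (r+1) → F m) (i j : Fin m),
      (∑ t : Fin (r+1), Pmat ξ (t:ℕ) (a t)) j i = (∑ t : Fin (r+1), Pmat ξ (t:ℕ) (a t)) i j := by
    intro a i j
    simp only [Matrix.sum_apply]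
    exact Finset.sum_congr rfl fun t _ => Pmat_symm ξ _ _ i j
  have hdiagPa : ∀ (a : Fin (r+1) → F m) (i : Fin m),
      (∑ t : Fin (r+1), Pmat ξ (t:ℕ) (a t)) i i = Pmat ξ 0 (a 0) i i := by
    intro a i
    simp only [Matrix.sum_apply]
    rw [Finset.sum_eq_single (0 : Fin (r+1))]
    · norm_num
    · intro t _ ht
      exact Pmat_diag_zero ξ _ (hvne t ht) (a t) i
    · intro h; exact absurd (Finset.mem_univ _) h
  have hsub : ∀ u v w : ZMod 4, u + v + w - u = v + w := fun u v w => by ring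
  have key : ∀ a : Fin (r+1) → F m,
      qform (∑ t : Fin (r+1), Pmat ξ (t:ℕ) (a t)) (x+e)
        - qform (∑ t : Fin (r+1), Pmat ξ (t:ℕ) (a t)) x = ∑ t : Fin (r+1), δ t (a t) := by
    intro a
    rw [qform_add_decomp _ (hPasymm a) x e, hsub]
    rw [qform_diag_decomp _ (hPasymm a) e]
    have hd : (∑ i : Fin m, lift2 (e i * (∑ t : Fin (r+1), Pmat ξ (t:ℕ) (a t)) i i * e i))
        = ∑ i : Fin m, lift2 (e i * Pmat ξ 0 (a 0) i i * e i) :=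
      Finset.sum_congr rfl fun i _ => by rw [hdiagPa a i]
    rw [hd]
    rw [uptri_sum Finset.univ (fun t : Fin (r+1) => Pmat ξ (t:ℕ) (a t)) e]
    rw [bilin_sum Finset.univ (fun t : Fin (r+1) => Pmat ξ (t:ℕ) (a t)) x e]
    rw [L2_sum, L2_sum]
    simp only [hδ, Fin.sum_univ_succ, if_pos rfl, Fin.succ_ne_zero, if_false, Fin.val_zero,
      Fin.isValue, two_lift2_add, Finset.sum_add_distrib]
    rw [qform_diag_decomp (Pmat ξ 0 (a 0)) (fun i j => Pmat_symm ξ 0 (a 0) i j) e]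
    abel_nf
    ac_rfl
  have main : (∑ a : Fin (r + 1) → GaloisField 2 m,
        zeta (qform (∑ t : Fin (r + 1), Pmat ξ (t : ℕ) (a t)) (x + e) -
          qform (∑ t : Fin (r + 1), Pmat ξ (t : ℕ) (a t)) x))
      = ∏ t : Fin (r+1), ∑ b : F m, zeta (δ t b) := by
    rw [Fintype.prod_sum (fun t b => zeta (δ t b))]
    apply Finset.sum_congr rfl; intro a _
    rw [key a, zeta_sum]
  have h0 : (∑ b : F m, zeta (δ 0 b)) = ∑ a : GaloisField 2 m,
      zeta (∑ i : Fin m, ∑ j : Fin m,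
        lift2 (e i) * lift2 (Pmat ξ 0 a i j) * (2 * lift2 (x j) + lift2 (e j))) := by
    apply Finset.sum_congr rfl; intro b _
    congr 1
    simp only [hδ, if_pos rfl]
    exact delta0_eq x e (Pmat ξ 0 b) (fun i j => Pmat_symm ξ 0 b i j)
  have ht' : ∀ t : Fin (r+1), t ≠ 0 →
      ((∑ b : F m, zeta (δ t b)) ≠ 0 ↔ Cfe ξ x e (t:ℕ) = 0) := by
    intro t ht
    have htv : (t:ℕ) ≠ 0 := hvne t ht
    have hδt : ∀ b : F m, δ t b = 2 * lift2 (tr (Cfe ξ x e (t:ℕ) * b)) := by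
      intro b
      simp only [hδ, if_neg ht]
      rw [beta_tr ξ x e (t:ℕ) htv b]
    rw [Finset.sum_congr rfl (fun b _ => by rw [hδt b])]
    exact charSum_ne_zero_iff _
  rw [main, Finset.prod_ne_zero_iff]
  constructor
  · intro h
    refine ⟨?_, ?_⟩
    · intro t h1 h2
      have hlt : t < r + 1 := by omega
      have htf : (⟨t, hlt⟩ : Fin (r+1)) ≠ 0 := by
        intro hc
        have : t = 0 := by simpa [Fin.ext_iff] using hc
        omega
      have hc := (ht' ⟨t, hlt⟩ htf).mp (h _ (Finset.mem_univ _))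
      rw [Cfe_zero_iff ξ x e _ hE] at hc
      exact hc
    · have hc := h 0 (Finset.mem_univ _)
      rw [h0] at hc
      exact hc
  · rintro ⟨hc1, hc2⟩ t _
    by_cases ht0 : t = 0
    · subst ht0
      rw [h0]
      exact hc2
    · rw [ht' t ht0, Cfe_zero_iff ξ x e _ hE]
      have h1 : 1 ≤ (t:ℕ) := by
        have := hvne t ht0
        omega
      have h2 : (t:ℕ) ≤ r := by omega
      exact hc1 _ h1 h2


end DGPaper
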